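/- Let H be a topologically transitive subgroup of Homeo₊(ℝ) isomorphic to ℤ². Then H is minimal, i.e., every orbit of H is dense in ℝ. -/
import Mathlib


/-- The group of self-homeomorphisms of a topological space. -/
instance {X : Type*} [TopologicalSpace X] : Group (X ≃ₜ X) where
  mul f g := g.trans f
  one := Homeomorph.refl X
  inv := Homeomorph.symm
  mul_assoc _ _ _ := rfl
  one_mul _ := Homeomorph.ext fun _ => rfl
  mul_one _ := Homeomorph.ext fun _ => rfl
  inv_mul_cancel f := Homeomorph.ext f.symm_apply_apply

/-- A subgroup of the homeomorphism group is topologically transitive if some element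
maps any given nonempty open set to meet any other given nonempty open set. -/
def TopTransitive {X : Type*} [TopologicalSpace X] (G : Subgroup (X ≃ₜ X)) : Prop :=
  ∀ U V : Set X, IsOpen U → IsOpen V → U.Nonempty → V.Nonempty →
    ∃ g ∈ G, (⇑g '' U ∩ V).Nonempty

section Aux

lemma hmul_apply (f g : ℝ ≃ₜ ℝ) (x : ℝ) : (f * g) x = f (g x) := rfl

lemma hinv_apply (f : ℝ ≃ₜ ℝ) (x : ℝ) : (f⁻¹) x = f.symm x := rfl

lemma hinv_fix (f : ℝ ≃ₜ ℝ) (c : ℝ) (h : f c = c) : f⁻¹ c = c := by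
  rw [hinv_apply]; nth_rewrite 1 [← h]; exact f.symm_apply_apply c

lemma hfix_pow (f : ℝ ≃ₜ ℝ) (c : ℝ) (h : f c = c) : ∀ n : ℕ, (f ^ n) c = c := by
  intro n; induction n with
  | zero => rfl
  | succ n ih => rw [pow_succ, hmul_apply, h, ih]

lemma hfix_zpow (f : ℝ ≃ₜ ℝ) (c : ℝ) (h : f c = c) : ∀ n : ℤ, (f ^ n) c = c := by
  intro n
  cases n with
  | ofNat k => rw [Int.ofNat_eq_coe, zpow_natCast]; exact hfix_pow f c h k
  | negSucc k => rw [zpow_negSucc]; exact hinv_fix _ _ (hfix_pow f c h (k+1))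

lemma hlt_pow (f : ℝ ≃ₜ ℝ) (hf : StrictMono ⇑f) (c : ℝ) (h : c < f c) :
    ∀ n : ℕ, c < (f ^ (n+1)) c := by
  intro n; induction n with
  | zero => rw [pow_one]; exact h
  | succ n ih => rw [pow_succ', hmul_apply]; exact h.trans (hf ih)

lemma hgt_pow (f : ℝ ≃ₜ ℝ) (hf : StrictMono ⇑f) (c : ℝ) (h : f c < c) :
    ∀ n : ℕ, (f ^ (n+1)) c < c := by
  intro n; induction n with
  | zero => rw [pow_one]; exact h
  | succ n ih => rw [pow_succ', hmul_apply]; exact (hf ih).trans h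

lemma hfix_of_zpow (f : ℝ ≃ₜ ℝ) (hf : StrictMono ⇑f) (c : ℝ) (n : ℤ) (hn : n ≠ 0)
    (h : (f ^ n) c = c) : f c = c := by
  have key : ∃ k : ℕ, (f ^ (k+1)) c = c := by
    cases n with
    | ofNat k =>
      cases k with
      | zero => exact absurd rfl (by exact_mod_cast hn)
      | succ k => exact ⟨k, by rw [Int.ofNat_eq_coe, zpow_natCast] at h; exact h⟩
    | negSucc k =>
      refine ⟨k, ?_⟩
      rw [zpow_negSucc, hinv_apply] at h
      have := congrArg (⇑(f ^ (k+1))) h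
      rw [(f ^ (k+1)).apply_symm_apply] at this
      exact this.symm
  obtain ⟨k, hk⟩ := key
  rcases lt_trichotomy (f c) c with hlt | heq | hgt
  · exact absurd hk (ne_of_lt (hgt_pow f hf c hlt k))
  · exact heq
  · exact absurd hk (ne_of_gt (hlt_pow f hf c hgt k))

lemma hstay_ge (f : ℝ ≃ₜ ℝ) (hf : StrictMono ⇑f) (b B : ℝ) (hb : f b = b) (hB : f B = B)
    (hlt : ∀ t, b < t → t < B → t < f t) :
    ∀ n : ℕ, ∀ w, b < w → w < B → (b < (f ^ n) w ∧ (f ^ n) w < B ∧ w ≤ (f ^ n) w) := by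
  intro n; induction n with
  | zero => intro w h1 h2; rw [pow_zero]; exact ⟨h1, h2, le_refl _⟩
  | succ n ih =>
    intro w h1 h2
    obtain ⟨i1, i2, i3⟩ := ih w h1 h2
    rw [pow_succ', hmul_apply]
    refine ⟨?_, ?_, ?_⟩
    · rw [← hb]; exact hf i1
    · rw [← hB]; exact hf i2
    · exact i3.trans (le_of_lt (hlt _ i1 i2))

lemma hstay_le (f : ℝ ≃ₜ ℝ) (hf : StrictMono ⇑f) (b B : ℝ) (hb : f b = b) (hB : f B = B)
    (hlt : ∀ t, b < t → t < B → f t < t) :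
    ∀ n : ℕ, ∀ w, b < w → w < B → (b < (f ^ n) w ∧ (f ^ n) w < B ∧ (f ^ n) w ≤ w) := by
  intro n; induction n with
  | zero => intro w h1 h2; rw [pow_zero]; exact ⟨h1, h2, le_refl _⟩
  | succ n ih =>
    intro w h1 h2
    obtain ⟨i1, i2, i3⟩ := ih w h1 h2
    rw [pow_succ', hmul_apply]
    refine ⟨?_, ?_, ?_⟩
    · rw [← hb]; exact hf i1
    · rw [← hB]; exact hf i2
    · exact (le_of_lt (hlt _ i1 i2)).trans i3

lemma cyclic_block (f : ℝ ≃ₜ ℝ) (hf : StrictMono ⇑f) (hfi : StrictMono ⇑(f⁻¹))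
    (b B : ℝ) (hbB : b < B) (hb : f b = b) (hB : f B = B)
    (hlt : ∀ t, b < t → t < B → t < f t) :
    ∃ t0 s t1 : ℝ, b < t0 ∧ t0 < s ∧ s < t1 ∧ t1 < B ∧
      ∀ (n : ℤ) (u : ℝ), t0 < u → u < s → ¬(s < (f ^ n) u ∧ (f ^ n) u < t1) := by
  set t0 := (b + B) / 2 with ht0def
  have ht01 : b < t0 := by simp only [ht0def]; linarith
  have ht02 : t0 < B := by simp only [ht0def]; linarith
  set t1 := f t0 with ht1def
  have ht11 : t0 < t1 := hlt t0 ht01 ht02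
  have ht12 : t1 < B := by rw [ht1def, ← hB]; exact hf ht02
  set s := (t0 + t1) / 2 with hsdef
  have hs1 : t0 < s := by simp only [hsdef]; linarith
  have hs2 : s < t1 := by simp only [hsdef]; linarith
  refine ⟨t0, s, t1, ht01, hs1, hs2, ht12, ?_⟩
  intro n u hu1 hu2 hv
  obtain ⟨hv1, hv2⟩ := hv
  have hub : b < u := ht01.trans hu1
  have huB : u < B := hu2.trans (hs2.trans ht12)
  have hfib : f⁻¹ b = b := hinv_fix f b hb
  have hfiB : f⁻¹ B = B := hinv_fix f B hB
  have hfiIoo : ∀ t, b < t → t < B → (b < f⁻¹ t ∧ f⁻¹ t < B) := by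
    intro t h1 h2
    constructor
    · rw [← hfib]; exact hfi h1
    · rw [← hfiB]; exact hfi h2
  have hltinv : ∀ t, b < t → t < B → f⁻¹ t < t := by
    intro t h1 h2
    obtain ⟨j1, j2⟩ := hfiIoo t h1 h2
    have h3 := hlt _ j1 j2
    rw [hinv_apply] at h3 ⊢
    rwa [f.apply_symm_apply] at h3
  cases n with
  | ofNat k =>
    cases k with
    | zero =>
      rw [Int.ofNat_eq_coe, Nat.cast_zero, zpow_zero] at hv1
      have h1u : (1 : ℝ ≃ₜ ℝ) u = u := rfl
      rw [h1u] at hv1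
      linarith
    | succ k =>
      rw [Int.ofNat_eq_coe, zpow_natCast, pow_succ, hmul_apply] at hv2
      have hfu1 : t1 < f u := by rw [ht1def]; exact hf hu1
      have hfu2 : f u < B := by rw [← hB]; exact hf huB
      have := (hstay_ge f hf b B hb hB hlt k (f u) ((ht01.trans ht11).trans hfu1) hfu2).2.2
      linarith
  | negSucc k =>
    rw [zpow_negSucc, ← inv_pow, pow_succ, hmul_apply] at hv1
    have hfiu1 : b < f⁻¹ u := (hfiIoo u hub huB).1
    have hfiu2 : f⁻¹ u < t0 := by
      have h4 : f⁻¹ t1 = t0 := by rw [ht1def, hinv_apply, f.symm_apply_apply]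
      rw [← h4]; exact hfi (hu2.trans hs2)
    have := (hstay_le f⁻¹ hfi b B hfib hfiB hltinv k (f⁻¹ u) hfiu1 (hfiu2.trans ht02)).2.2
    linarith

lemma exists_gen {G : Type*} [Group G] (S : Set G)
    (h1 : (1 : G) ∈ S)
    (hmul : ∀ s ∈ S, ∀ t ∈ S, s * t ∈ S)
    (hinv : ∀ s ∈ S, s⁻¹ ∈ S)
    (φ : G →* Multiplicative ℤ)
    (hinj : ∀ s ∈ S, ∀ t ∈ S, φ s = φ t → s = t) :
    ∃ g₀ ∈ S, ∀ s ∈ S, ∃ n : ℤ, s = g₀ ^ n := by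
  have hSpow : ∀ g ∈ S, ∀ n : ℤ, g ^ n ∈ S := by
    intro g hg n
    have hnat : ∀ k : ℕ, g ^ k ∈ S := by
      intro k; induction k with
      | zero => simpa using h1
      | succ k ih => rw [pow_succ]; exact hmul _ ih _ hg
    cases n with
    | ofNat k => rw [Int.ofNat_eq_coe, zpow_natCast]; exact hnat k
    | negSucc k => rw [zpow_negSucc]; exact hinv _ (hnat (k+1))
  let K : AddSubgroup ℤ :=
    { carrier := {n : ℤ | ∃ s ∈ S, Multiplicative.toAdd (φ s) = n}
      zero_mem' := ⟨1, h1, by simp⟩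
      add_mem' := by
        rintro a b ⟨s, hs, rfl⟩ ⟨t, ht, rfl⟩
        exact ⟨s * t, hmul _ hs _ ht, by simp⟩
      neg_mem' := by
        rintro a ⟨s, hs, rfl⟩
        exact ⟨s⁻¹, hinv _ hs, by simp⟩ }
  obtain ⟨a, ha⟩ := Int.subgroup_cyclic K
  have haK : a ∈ K := by rw [ha]; exact AddSubgroup.subset_closure rfl
  obtain ⟨g₀, hg₀, hφg₀⟩ := haK
  refine ⟨g₀, hg₀, ?_⟩
  intro s hs
  have hsK : Multiplicative.toAdd (φ s) ∈ K := ⟨s, hs, rfl⟩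
  rw [ha] at hsK
  obtain ⟨n, hn⟩ := AddSubgroup.mem_closure_singleton.1 hsK
  refine ⟨n, ?_⟩
  apply hinj s hs _ (hSpow _ hg₀ n)
  have h5 : Multiplicative.toAdd (φ (g₀ ^ n)) = n • a := by
    rw [map_zpow, ← hφg₀]; rfl
  apply Multiplicative.toAdd.injective
  rw [h5, hn]

end Aux

/-- A topologically transitive subgroup of `Homeo₊(ℝ)` isomorphic to `ℤ²` is minimal:
every orbit is dense in `ℝ`. -/
theorem Z2_transitive_is_minimal (H : Subgroup (ℝ ≃ₜ ℝ))
    (hop : ∀ h ∈ H, StrictMono ⇑h)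
    (hiso : Nonempty (H ≃* Multiplicative (ℤ × ℤ)))
    (htrans : TopTransitive H) :
    ∀ x : ℝ, Dense {y : ℝ | ∃ h ∈ H, h x = y} := by
  obtain ⟨e⟩ := hiso
  intro x
  by_contra hnd
  rw [dense_iff_inter_open] at hnd
  push_neg at hnd
  obtain ⟨U, hUo, hUne, hUA⟩ := hnd
  obtain ⟨p, q, hpq, hpqU⟩ := hUo.exists_Ioo_subset hUne
  set A : Set ℝ := {y : ℝ | ∃ h ∈ H, h x = y} with hAdef
  set D := closure A with hDdef
  have hxA : x ∈ A := ⟨1, H.one_mem, rfl⟩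
  have hDne : D.Nonempty := ⟨x, subset_closure hxA⟩
  have hAInv : ∀ g : ℝ ≃ₜ ℝ, g ∈ H → ∀ z ∈ A, g z ∈ A := by
    rintro g hg z ⟨h, hh, rfl⟩
    exact ⟨g * h, H.mul_mem hg hh, rfl⟩
  have hDInv : ∀ g : ℝ ≃ₜ ℝ, g ∈ H → ∀ z ∈ D, g z ∈ D := by
    intro g hg z hz
    rw [hDdef, mem_closure_iff] at hz ⊢
    intro O hO hgz
    obtain ⟨w, hw1, hw2⟩ := hz (⇑g ⁻¹' O) (hO.preimage g.continuous) (by simpa using hgz)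
    exact ⟨g w, hw1, hAInv g hg w hw2⟩
  have hAIoo : ∀ z ∈ A, z ∉ Set.Ioo p q := by
    intro z hz hzI
    have h0 : z ∈ U ∩ A := ⟨hpqU hzI, hz⟩
    rw [hUA] at h0; exact h0
  have hDIoo : ∀ z ∈ D, z ∉ Set.Ioo p q := by
    intro z hz hzI
    rw [hDdef, mem_closure_iff] at hz
    obtain ⟨w, hw1, hw2⟩ := hz _ isOpen_Ioo hzI
    exact hAIoo w hw2 hw1
  have hglobfix : ∀ c : ℝ, (∀ g : ℝ ≃ₜ ℝ, g ∈ H → g c = c) → False := by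
    intro c hfix
    obtain ⟨g, hg, y, hy⟩ := htrans (Set.Ioo (c-1) c) (Set.Ioo c (c+1)) isOpen_Ioo isOpen_Ioo
      (Set.nonempty_Ioo.2 (by linarith)) (Set.nonempty_Ioo.2 (by linarith))
    obtain ⟨⟨u, hu, rfl⟩, hy2⟩ := hy
    have h1 : g u < c := by rw [← hfix g hg]; exact (hop g hg) hu.2
    linarith [hy2.1]
  have hDnba : ¬ BddAbove D := by
    intro hba
    have hd : sSup D ∈ D := isClosed_closure.csSup_mem hDne hba
    apply hglobfix (sSup D)
    intro g hg
    have h1 : g (sSup D) ≤ sSup D := le_csSup hba (hDInv g hg _ hd)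
    have h2 : g⁻¹ (sSup D) ≤ sSup D := le_csSup hba (hDInv g⁻¹ (H.inv_mem hg) _ hd)
    have h3 : sSup D ≤ g (sSup D) := by
      have h4 := (hop g hg).monotone h2
      rwa [hinv_apply, g.apply_symm_apply] at h4
    exact le_antisymm h1 h3
  have hDnbb : ¬ BddBelow D := by
    intro hbb
    have hd : sInf D ∈ D := isClosed_closure.csInf_mem hDne hbb
    apply hglobfix (sInf D)
    intro g hg
    have h1 : sInf D ≤ g (sInf D) := csInf_le hbb (hDInv g hg _ hd)
    have h2 : sInf D ≤ g⁻¹ (sInf D) := csInf_le hbb (hDInv g⁻¹ (H.inv_mem hg) _ hd)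
    have h3 : g (sInf D) ≤ sInf D := by
      have h4 := (hop g hg).monotone h2
      rwa [hinv_apply, g.apply_symm_apply] at h4
    exact le_antisymm h3 h1
  obtain ⟨zb, hzbD, hzbp⟩ : ∃ z ∈ D, z < p := (not_bddBelow_iff.1 hDnbb) p
  obtain ⟨zB, hzBD, hzBq⟩ : ∃ z ∈ D, q < z := (not_bddAbove_iff.1 hDnba) q
  have hDbne : (D ∩ Set.Iic p).Nonempty := ⟨zb, hzbD, le_of_lt hzbp⟩
  have hDbba : BddAbove (D ∩ Set.Iic p) := ⟨p, fun w hw => hw.2⟩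
  have hDBne : (D ∩ Set.Ici q).Nonempty := ⟨zB, hzBD, le_of_lt hzBq⟩
  have hDBbb : BddBelow (D ∩ Set.Ici q) := ⟨q, fun w hw => hw.2⟩
  set b := sSup (D ∩ Set.Iic p) with hbdef
  set B := sInf (D ∩ Set.Ici q) with hBdef
  have hbmem : b ∈ D ∩ Set.Iic p :=
    (isClosed_closure.inter isClosed_Iic).csSup_mem hDbne hDbba
  have hBmem : B ∈ D ∩ Set.Ici q :=
    (isClosed_closure.inter isClosed_Ici).csInf_mem hDBne hDBbb
  have hbD : b ∈ D := hbmem.1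
  have hBD : B ∈ D := hBmem.1
  have hbB : b < B := lt_of_le_of_lt hbmem.2 (lt_of_lt_of_le hpq hBmem.2)
  have hgap : ∀ z ∈ D, ¬ (b < z ∧ z < B) := by
    rintro z hz ⟨h1, h2⟩
    rcases le_or_gt z p with hzp | hzp
    · exact absurd (le_csSup hDbba ⟨hz, hzp⟩) (not_le.2 h1)
    · rcases le_or_gt q z with hqz | hqz
      · exact absurd (csInf_le hDBbb ⟨hz, hqz⟩) (not_le.2 h2)
      · exact hDIoo z hz ⟨hzp, hqz⟩
  -- any element of H moving a point of the gap within the gap fixes both endpoints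
  have hfixbB : ∀ g : ℝ ≃ₜ ℝ, g ∈ H → ∀ u, b < u → u < B → b < g u → g u < B →
      g b = b ∧ g B = B := by
    intro g hg u hu1 hu2 hgu1 hgu2
    have hmono := hop g hg
    have hmonoi := hop g⁻¹ (H.inv_mem hg)
    have hgbD : g b ∈ D := hDInv g hg b hbD
    have hgBD : g B ∈ D := hDInv g hg B hBD
    have hgbb : g b ≤ b := by
      by_contra hc; push_neg at hc
      exact hgap (g b) hgbD ⟨hc, lt_trans (hmono hu1) hgu2⟩
    have hgbeq : g b = b := by
      rcases eq_or_lt_of_le hgbb with h | h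
      · exact h
      · exfalso
        have k1 : b < g⁻¹ b := by
          have k := hmonoi h
          rwa [hinv_apply, hinv_apply, g.symm_apply_apply] at k
        have k2 : g⁻¹ b < u := by
          have k := hmonoi hgu1
          rwa [hinv_apply, hinv_apply, g.symm_apply_apply] at k
        exact hgap _ (hDInv g⁻¹ (H.inv_mem hg) b hbD) ⟨k1, k2.trans hu2⟩
    have hgBB : B ≤ g B := by
      by_contra hc; push_neg at hc
      exact hgap (g B) hgBD ⟨lt_trans hgu1 (hmono hu2), hc⟩
    have hgBeq : g B = B := by
      rcases eq_or_lt_of_le hgBB with h | h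
      · exact h.symm
      · exfalso
        have k1 : g⁻¹ B < B := by
          have k := hmonoi h
          rwa [hinv_apply, hinv_apply, g.symm_apply_apply] at k
        have k2 : u < g⁻¹ B := by
          have k := hmonoi hgu2
          rwa [hinv_apply, hinv_apply, g.symm_apply_apply] at k
        exact hgap _ (hDInv g⁻¹ (H.inv_mem hg) B hBD) ⟨lt_trans hu1 k2, k1⟩
    exact ⟨hgbeq, hgBeq⟩
  -- transitivity within the gap, with endpoint-fixing elements
  have hStrans : ∀ c d c' d' : ℝ, b ≤ c → c < d → d ≤ B → b ≤ c' → c' < d' → d' ≤ B →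
      ∃ g : ℝ ≃ₜ ℝ, ∃ _ : g ∈ H, (g b = b ∧ g B = B) ∧
        ∃ u, c < u ∧ u < d ∧ c' < g u ∧ g u < d' := by
    intro c d c' d' h1 h2 h3 h4 h5 h6
    obtain ⟨g, hg, y, hy⟩ := htrans (Set.Ioo c d) (Set.Ioo c' d') isOpen_Ioo isOpen_Ioo
      (Set.nonempty_Ioo.2 h2) (Set.nonempty_Ioo.2 h5)
    obtain ⟨⟨u, hu, rfl⟩, hy2⟩ := hy
    have hub : b < u := lt_of_le_of_lt h1 hu.1
    have huB : u < B := lt_of_lt_of_le hu.2 h3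
    have hgub : b < g u := lt_of_le_of_lt h4 hy2.1
    have hguB : g u < B := lt_of_lt_of_le hy2.2 h6
    exact ⟨g, hg, hfixbB g hg u hub huB hgub hguB, u, hu.1, hu.2, hy2.1, hy2.2⟩
  -- the algebra
  set V : H → ℤ × ℤ := fun g => Multiplicative.toAdd (e g) with hVdef
  have hVinj : Function.Injective V := by
    intro a b hab
    exact e.injective (Multiplicative.toAdd.injective hab)
  have hVmul : ∀ s t : H, V (s * t) = V s + V t := by
    intro s t; simp only [hVdef, map_mul]; rfl
  have hVzpow : ∀ (s : H) (n : ℤ), V (s ^ n) = n • V s := by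
    intro s n; simp only [hVdef, map_zpow]; rfl
  set Sset : Set H := {g : H | ((g : ℝ ≃ₜ ℝ)) b = b ∧ ((g : ℝ ≃ₜ ℝ)) B = B} with hSdef
  have hS1 : (1 : H) ∈ Sset := ⟨rfl, rfl⟩
  have hSmul : ∀ s ∈ Sset, ∀ t ∈ Sset, s * t ∈ Sset := by
    intro s hs t ht
    constructor
    · show ((s : ℝ ≃ₜ ℝ) * (t : ℝ ≃ₜ ℝ)) b = b
      rw [hmul_apply, ht.1, hs.1]
    · show ((s : ℝ ≃ₜ ℝ) * (t : ℝ ≃ₜ ℝ)) B = B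
      rw [hmul_apply, ht.2, hs.2]
  have hSinv : ∀ s ∈ Sset, s⁻¹ ∈ Sset := by
    intro s hs
    exact ⟨hinv_fix _ _ hs.1, hinv_fix _ _ hs.2⟩
  have hSfixb : ∀ s ∈ Sset, ∀ n : ℤ, ((s ^ n : H) : ℝ ≃ₜ ℝ) b = b := by
    intro s hs n
    have h0 : ((s ^ n : H) : ℝ ≃ₜ ℝ) = (s : ℝ ≃ₜ ℝ) ^ n := rfl
    rw [h0]; exact hfix_zpow _ _ hs.1 n
  by_cases hNP : ∃ s₁ ∈ Sset, ∃ s₂ ∈ Sset, (V s₁).1 * (V s₂).2 - (V s₁).2 * (V s₂).1 ≠ 0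
  · -- "rank two" stabilizer: b is globally fixed, contradiction
    obtain ⟨s₁, hs₁, s₂, hs₂, hdet⟩ := hNP
    apply hglobfix b
    intro g hg
    set h : H := ⟨g, hg⟩ with hhdef
    set Dt := (V s₁).1 * (V s₂).2 - (V s₁).2 * (V s₂).1 with hDt
    set mm := (V s₂).2 * (V h).1 - (V s₂).1 * (V h).2 with hmm
    set kk := (V s₁).1 * (V h).2 - (V s₁).2 * (V h).1 with hkk
    have key : h ^ Dt = s₁ ^ mm * s₂ ^ kk := by
      apply hVinj
      rw [hVzpow, hVmul, hVzpow, hVzpow]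
      apply Prod.ext
      · simp only [Prod.smul_fst, Prod.fst_add, smul_eq_mul, hDt, hmm, hkk]; ring
      · simp only [Prod.smul_snd, Prod.snd_add, smul_eq_mul, hDt, hmm, hkk]; ring
    have hfixD : ((h ^ Dt : H) : ℝ ≃ₜ ℝ) b = b := by
      rw [key]
      have h0 : ((s₁ ^ mm * s₂ ^ kk : H) : ℝ ≃ₜ ℝ) b
          = ((s₁ ^ mm : H) : ℝ ≃ₜ ℝ) (((s₂ ^ kk : H) : ℝ ≃ₜ ℝ) b) := rfl
      rw [h0, hSfixb s₂ hs₂ kk, hSfixb s₁ hs₁ mm]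
    have h1 : (g ^ Dt) b = b := hfixD
    exact hfix_of_zpow g (hop g hg) b Dt hdet h1
  · -- cyclic stabilizer case
    push_neg at hNP
    have hcyc : ∃ g₀ ∈ Sset, ∀ s ∈ Sset, ∃ n : ℤ, s = g₀ ^ n := by
      by_cases htriv : ∀ s ∈ Sset, s = (1 : H)
      · exact ⟨1, hS1, fun s hs => ⟨0, by rw [htriv s hs, zpow_zero]⟩⟩
      · push_neg at htriv
        obtain ⟨s₀, hs₀S, hs₀ne⟩ := htriv
        have hVne : V s₀ ≠ 0 := by
          intro h0
          apply hs₀ne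
          apply hVinj
          rw [h0]
          simp only [hVdef, map_one]
          rfl
        by_cases hfst : (V s₀).1 ≠ 0
        · refine exists_gen Sset hS1 hSmul hSinv
            (MonoidHom.mk' (fun g => Multiplicative.ofAdd (V g).1)
              (by intro a b
                  show Multiplicative.ofAdd (V (a * b)).1 = _
                  rw [hVmul]; rfl)) ?_
          intro s hs t ht hφ
          have h1 : (V s).1 = (V t).1 := by
            have := Multiplicative.ofAdd.injective hφ
            exact this
          have hps := hNP s hs s₀ hs₀S
          have hpt := hNP t ht s₀ hs₀S
          apply hVinj
          apply Prod.ext h1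
          have h2 : (V s).2 * (V s₀).1 = (V t).2 * (V s₀).1 := by
            have e1 : (V s).2 * (V s₀).1 = (V s).1 * (V s₀).2 := by linarith
            have e2 : (V t).2 * (V s₀).1 = (V t).1 * (V s₀).2 := by linarith
            rw [e1, e2, h1]
          exact mul_right_cancel₀ hfst h2
        · push_neg at hfst
          have hsnd : (V s₀).2 ≠ 0 := by
            intro h0
            exact hVne (Prod.ext hfst h0)
          refine exists_gen Sset hS1 hSmul hSinv
            (MonoidHom.mk' (fun g => Multiplicative.ofAdd (V g).2)
              (by intro a b
                  show Multiplicative.ofAdd (V (a * b)).2 = _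
                  rw [hVmul]; rfl)) ?_
          intro s hs t ht hφ
          have h2 : (V s).2 = (V t).2 := Multiplicative.ofAdd.injective hφ
          have hps := hNP s hs s₀ hs₀S
          have hpt := hNP t ht s₀ hs₀S
          apply hVinj
          refine Prod.ext ?_ h2
          have h1 : (V s).1 * (V s₀).2 = (V t).1 * (V s₀).2 := by
            have e1 : (V s).1 * (V s₀).2 = (V s).2 * (V s₀).1 := by linarith
            have e2 : (V t).1 * (V s₀).2 = (V t).2 * (V s₀).1 := by linarith
            rw [e1, e2, h2]
          exact mul_right_cancel₀ hsnd h1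
    obtain ⟨g₀, hg₀S, hrep⟩ := hcyc
    set f : ℝ ≃ₜ ℝ := (g₀ : ℝ ≃ₜ ℝ) with hfdef
    have hfH : f ∈ H := g₀.2
    have hf : StrictMono ⇑f := hop f hfH
    have hfiH : f⁻¹ ∈ H := H.inv_mem hfH
    have hfi : StrictMono ⇑(f⁻¹) := hop _ hfiH
    have hfb : f b = b := hg₀S.1
    have hfB : f B = B := hg₀S.2
    have hpow : ∀ (g : ℝ ≃ₜ ℝ), g ∈ H → g b = b → g B = B → ∃ n : ℤ, g = f ^ n := by
      intro g hg hb' hB'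
      obtain ⟨n, hn⟩ := hrep ⟨g, hg⟩ ⟨hb', hB'⟩
      refine ⟨n, ?_⟩
      have := congrArg (fun t : H => (t : ℝ ≃ₜ ℝ)) hn
      exact this
    by_cases hfixio : ∃ c, b < c ∧ c < B ∧ f c = c
    · obtain ⟨c, hc1, hc2, hcf⟩ := hfixio
      obtain ⟨g, hg, ⟨hb', hB'⟩, u, hu1, hu2, hv1, hv2⟩ :=
        hStrans b c c B le_rfl hc1 (le_of_lt hc2) (le_of_lt hc1) hc2 le_rfl
      obtain ⟨n, rfl⟩ := hpow g hg hb' hB'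
      have hfnc : (f ^ n) c = c := hfix_zpow f c hcf n
      have hmn : StrictMono ⇑(f ^ n) := hop _ (by exact (g₀ ^ n).2)
      have h1 : (f ^ n) u < c := by rw [← hfnc]; exact hmn hu2
      linarith
    · push_neg at hfixio
      set m0 := (b + B) / 2 with hm0def
      have hm1 : b < m0 := by simp only [hm0def]; linarith
      have hm2 : m0 < B := by simp only [hm0def]; linarith
      have hIVT : ∀ t u', b < t → t < B → b < u' → u' < B → t < f t → f u' < u' → False := by
        intro t u' ht1 ht2 hu1 hu2 hft hfu
        have hcont : Continuous fun y => f y - y := f.continuous.sub continuous_id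
        rcases lt_or_ge t u' with h | h
        · have hmem : (0:ℝ) ∈ Set.Icc ((fun y => f y - y) u') ((fun y => f y - y) t) := by
            constructor
            · show f u' - u' ≤ (0:ℝ); linarith
            · show (0:ℝ) ≤ f t - t; linarith
          obtain ⟨c, hcIcc, hc0⟩ := intermediate_value_Icc' (le_of_lt h) hcont.continuousOn hmem
          exact hfixio c (lt_of_lt_of_le ht1 hcIcc.1) (lt_of_le_of_lt hcIcc.2 hu2)
            (sub_eq_zero.1 hc0)
        · have h' : u' < t := lt_of_le_of_ne h (fun hEq => by rw [hEq] at hfu; linarith)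
          have hmem : (0:ℝ) ∈ Set.Icc ((fun y => f y - y) u') ((fun y => f y - y) t) := by
            constructor
            · show f u' - u' ≤ (0:ℝ); linarith
            · show (0:ℝ) ≤ f t - t; linarith
          obtain ⟨c, hcIcc, hc0⟩ := intermediate_value_Icc (le_of_lt h') hcont.continuousOn hmem
          exact hfixio c (lt_of_lt_of_le hu1 hcIcc.1) (lt_of_le_of_lt hcIcc.2 ht2)
            (sub_eq_zero.1 hc0)
      rcases lt_or_gt_of_ne (hfixio m0 hm1 hm2) with hneg | hpos
      · have hsign : ∀ t, b < t → t < B → f t < t := by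
          intro t h1 h2
          rcases lt_trichotomy (f t) t with h | h | h
          · exact h
          · exact absurd h (hfixio t h1 h2)
          · exact (hIVT t m0 h1 h2 hm1 hm2 h hneg).elim
        have hfib : f⁻¹ b = b := hinv_fix f b hfb
        have hfiB : f⁻¹ B = B := hinv_fix f B hfB
        have hsigninv : ∀ t, b < t → t < B → t < f⁻¹ t := by
          intro t h1 h2
          have j1 : b < f⁻¹ t := by rw [← hfib]; exact hfi h1
          have j2 : f⁻¹ t < B := by rw [← hfiB]; exact hfi h2
          have h3 := hsign _ j1 j2
          rw [hinv_apply] at h3 ⊢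
          rwa [f.apply_symm_apply] at h3
        obtain ⟨t0, s, t1, a1, a2, a3, a4, hblock⟩ :=
          cyclic_block f⁻¹ hfi (by rw [inv_inv]; exact hf) b B hbB hfib hfiB hsigninv
        obtain ⟨g, hg, ⟨hb', hB'⟩, u, hu1, hu2, hv1, hv2⟩ :=
          hStrans t0 s s t1 (le_of_lt a1) a2 (le_of_lt (a3.trans a4))
            (le_of_lt (a1.trans a2)) a3 (le_of_lt a4)
        obtain ⟨n, rfl⟩ := hpow g hg hb' hB'
        have hE : (f⁻¹) ^ (-n) = f ^ n := by rw [inv_zpow, zpow_neg, inv_inv]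
        exact hblock (-n) u hu1 hu2 ⟨by rw [hE]; exact hv1, by rw [hE]; exact hv2⟩
      · have hsign : ∀ t, b < t → t < B → t < f t := by
          intro t h1 h2
          rcases lt_trichotomy (f t) t with h | h | h
          · exact (hIVT m0 t hm1 hm2 h1 h2 hpos h).elim
          · exact absurd h (hfixio t h1 h2)
          · exact h
        obtain ⟨t0, s, t1, a1, a2, a3, a4, hblock⟩ :=
          cyclic_block f hf hfi b B hbB hfb hfB hsign
        obtain ⟨g, hg, ⟨hb', hB'⟩, u, hu1, hu2, hv1, hv2⟩ :=
          hStrans t0 s s t1 (le_of_lt a1) a2 (le_of_lt (a3.trans a4))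
            (le_of_lt (a1.trans a2)) a3 (le_of_lt a4)
        obtain ⟨n, rfl⟩ := hpow g hg hb' hB'
        exact hblock n u hu1 hu2 ⟨hv1, hv2⟩
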